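/- Let a_{n,k} satisfy a_{n,k} = a_{n,k−1} + (2n+k−1)·a_{n−1,k} with a_{n,0} = (2n−1)!! and a_{k−1,k} = 0. Let γ_k be defined by γ_0 = 1 and γ_k = (1/(3k−3)!!)·(−Σ_{i=1}^{k}(γ_{k−i}/i!)·(3k+i−3)!!). Then for 0 ≤ k ≤ n, a_{n,k} = Σ_{i=0}^{k} (γ_{k−i}/i!)·(2n+k+i−1)!!. -/

import Mathlib

open Nat Finset

private lemma dfstep (m : ℕ) (hm : 2 ≤ m) : ((m)‼ : ℚ) = (m : ℚ) * ((m - 2)‼ : ℕ) := by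
  have hN : (m)‼ = m * (m - 2)‼ := by
    conv_lhs => rw [show m = (m - 2) + 2 from by omega]
    rw [Nat.doubleFactorial_add_two]
    congr 1
    omega
  rw [hN]
  push_cast
  ring

/-- Algebraic recurrence for the candidate closed form. -/
private lemma alg (γ : ℕ → ℚ) (k m : ℕ) (hm : 2 ≤ m) :
    ∑ i ∈ Finset.range (k + 2), γ (k + 1 - i) / (i ! : ℚ) * (((m + i)‼ : ℕ) : ℚ) =
    ∑ i ∈ Finset.range (k + 1), γ (k - i) / (i ! : ℚ) * (((m + i - 1)‼ : ℕ) : ℚ) +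
      (m : ℚ) * ∑ i ∈ Finset.range (k + 2),
        γ (k + 1 - i) / (i ! : ℚ) * (((m + i - 2)‼ : ℕ) : ℚ) := by
  have h1 : ∀ i ∈ Finset.range (k + 2),
      γ (k + 1 - i) / (i ! : ℚ) * (((m + i)‼ : ℕ) : ℚ) =
      (m : ℚ) * (γ (k + 1 - i) / (i ! : ℚ) * (((m + i - 2)‼ : ℕ) : ℚ)) +
        γ (k + 1 - i) * ((i : ℚ) / (i ! : ℚ)) * (((m + i - 2)‼ : ℕ) : ℚ) := by
    intro i _
    rw [dfstep (m + i) (by omega)]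
    push_cast
    ring
  rw [Finset.sum_congr rfl h1, Finset.sum_add_distrib, ← Finset.mul_sum]
  rw [add_comm]
  congr 1
  rw [Finset.sum_range_succ']
  simp only [Nat.cast_zero, zero_div, mul_zero, zero_mul, add_zero]
  apply Finset.sum_congr rfl
  intro i _
  have hfac : ((i + 1)! : ℚ) = ((i : ℚ) + 1) * (i ! : ℚ) := by
    rw [Nat.factorial_succ]; push_cast; ring
  have harg : m + (i + 1) - 2 = m + i - 1 := by omega
  have hi : (i ! : ℚ) ≠ 0 := by exact_mod_cast (Nat.factorial_pos i).ne'
  rw [harg, hfac, show k + 1 - (i + 1) = k - i from by omega]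
  have h1 : ((i : ℚ) + 1) ≠ 0 := by positivity
  field_simp
  push_cast
  ring

/-- Semi-closed-form expression for `a n k`: for `0 ≤ k ≤ n`,
`a n k = ∑_{i=0}^k (γ (k-i)/i!) * (2n+k+i-1)!!`. -/
theorem stmt5 (a : ℕ → ℕ → ℕ)
    (ha0 : ∀ n, a n 0 = (2 * n - 1)‼)
    (haz : ∀ k, 1 ≤ k → a (k - 1) k = 0)
    (harec : ∀ n k, 1 ≤ n → 1 ≤ k → k ≤ n →
      a n k = a n (k - 1) + (2 * n + k - 1) * a (n - 1) k)
    (γ : ℕ → ℚ) (hγ0 : γ 0 = 1)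
    (hγ : ∀ k, 1 ≤ k → γ k = (1 / (((3 * k - 3)‼ : ℕ) : ℚ)) *
      (-∑ i ∈ Finset.Icc 1 k, γ (k - i) / (i ! : ℚ) * (((3 * k + i - 3)‼ : ℕ) : ℚ))) :
    ∀ n k, k ≤ n →
      (a n k : ℚ) =
        ∑ i ∈ Finset.range (k + 1),
          γ (k - i) / (i ! : ℚ) * (((2 * n + k + i - 1)‼ : ℕ) : ℚ) := by
  -- The closed form vanishes at n = k - 1.
  have hzero : ∀ k : ℕ, 1 ≤ k →
      ∑ i ∈ Finset.range (k + 1),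
        γ (k - i) / (i ! : ℚ) * (((3 * k + i - 3)‼ : ℕ) : ℚ) = 0 := by
    intro k hk
    have hdf : (((3 * k - 3)‼ : ℕ) : ℚ) ≠ 0 := by
      exact_mod_cast (Nat.doubleFactorial_pos (3 * k - 3)).ne'
    have hγk := hγ k hk
    have hsplit : ∑ i ∈ Finset.range (k + 1),
        γ (k - i) / (i ! : ℚ) * (((3 * k + i - 3)‼ : ℕ) : ℚ) =
        γ k * (((3 * k - 3)‼ : ℕ) : ℚ) +
          ∑ i ∈ Finset.Icc 1 k, γ (k - i) / (i ! : ℚ) * (((3 * k + i - 3)‼ : ℕ) : ℚ) := by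
      rw [Finset.range_eq_Ico, Finset.sum_eq_sum_Ico_succ_bot (Nat.succ_pos k)]
      rw [show k.succ = k + 1 from rfl, Finset.Ico_add_one_right_eq_Icc]
      simp
    rw [hsplit, hγk]
    field_simp
    ring
  intro n
  induction n using Nat.strong_induction_on with
  | _ n ih =>
    intro k
    induction k with
    | zero =>
      intro _
      rw [ha0]
      simp [hγ0]
    | succ k ihk =>
      intro hk
      have hn1 : 1 ≤ n := by omega
      have hrec := harec n (k + 1) hn1 (by omega) hk
      have hk' : k ≤ n := by omega
      have hank := ihk hk'
      -- value of a (n-1) (k+1)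
      have hprev : (a (n - 1) (k + 1) : ℚ) =
          ∑ i ∈ Finset.range (k + 2),
            γ (k + 1 - i) / (i ! : ℚ) * (((2 * (n - 1) + (k + 1) + i - 1)‼ : ℕ) : ℚ) := by
        by_cases h : k + 1 ≤ n - 1
        · exact ih (n - 1) (by omega) (k + 1) h
        · have hnk : n = k + 1 := by omega
          have := haz (k + 1) (by omega)
          rw [show n - 1 = (k + 1) - 1 from by rw [hnk], this]
          rw [Nat.cast_zero]
          symm
          have := hzero (k + 1) (by omega)
          rw [← this]
          apply Finset.sum_congr rfl
          intro i _
          rw [show 3 * (k + 1) + i - 3 = 2 * ((k + 1) - 1) + (k + 1) + i - 1 from by omega]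
      simp only [Nat.add_sub_cancel] at hrec
      rw [show 2 * n + (k + 1) - 1 = 2 * n + k from by omega] at hrec
      rw [hrec, Nat.cast_add, Nat.cast_mul, hank, hprev]
      have halg := alg γ k (2 * n + k) (by omega)
      have s1 : ∑ i ∈ Finset.range (k + 2),
          γ (k + 1 - i) / (i ! : ℚ) * (((2 * (n - 1) + (k + 1) + i - 1)‼ : ℕ) : ℚ) =
          ∑ i ∈ Finset.range (k + 2),
          γ (k + 1 - i) / (i ! : ℚ) * (((2 * n + k + i - 2)‼ : ℕ) : ℚ) := by
        apply Finset.sum_congr rfl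
        intro i _
        rw [show 2 * (n - 1) + (k + 1) + i - 1 = 2 * n + k + i - 2 from by omega]
      have s2 : ∑ i ∈ Finset.range (k + 1 + 1),
          γ (k + 1 - i) / (i ! : ℚ) * (((2 * n + (k + 1) + i - 1)‼ : ℕ) : ℚ) =
          ∑ i ∈ Finset.range (k + 2),
          γ (k + 1 - i) / (i ! : ℚ) * (((2 * n + k + i)‼ : ℕ) : ℚ) := by
        apply Finset.sum_congr rfl
        intro i _
        rw [show 2 * n + (k + 1) + i - 1 = 2 * n + k + i from by omega]
      rw [s1, s2, halg]
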